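/- Let M be a matroid with rank function r, and let C₁, C₂ be distinct circuits of M. Then C₁ and C₂ form a modular pair of circuits if and only if r(C₁ ∪ C₂) + r(C₁ ∩ C₂) = r(C₁) + r(C₂). -/

import Mathlib

open Set

variable {α : Type*}

/-- A circuit of a matroid: a minimal dependent set. -/
def Matroid.IsCircuit' (M : Matroid α) (C : Set α) : Prop :=
  M.Dep C ∧ ∀ D, D ⊂ C → ¬ M.Dep D

/-- The rank (in `ℕ∞`) of a set in a matroid: the supremum of the cardinalities
of independent subsets. -/
noncomputable def Matroid.rk' (M : Matroid α) (X : Set α) : ℕ∞ :=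
  ⨆ I : {I : Set α // M.Indep I ∧ I ⊆ X}, (I : Set α).encard

/-- Two distinct circuits `C₁, C₂` form a modular pair if `C₁ ∪ C₂` does not
properly contain the union of two distinct circuits of `M`. -/
def Matroid.ModularPairOfCircuits (M : Matroid α) (C₁ C₂ : Set α) : Prop :=
  C₁ ≠ C₂ ∧ ∀ D₁ D₂, M.IsCircuit' D₁ → M.IsCircuit' D₂ → D₁ ≠ D₂ →
    ¬ (D₁ ∪ D₂ ⊂ C₁ ∪ C₂)

namespace Matroid

variable {M : Matroid α} {X Y I J C C₁ C₂ : Set α} {c : ℕ∞}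

lemma encard_le_rk' (hI : M.Indep I) (hIX : I ⊆ X) : I.encard ≤ M.rk' X :=
  le_iSup (fun J : {I : Set α // M.Indep I ∧ I ⊆ X} => (J : Set α).encard) ⟨I, hI, hIX⟩

lemma rk'_le (h : ∀ I, M.Indep I → I ⊆ X → I.encard ≤ c) : M.rk' X ≤ c :=
  iSup_le fun J => h J J.2.1 J.2.2

lemma IsBasis'.rk'_eq (hI : M.IsBasis' I X) : M.rk' X = I.encard := by
  refine le_antisymm (rk'_le fun J hJ hJX => ?_) (encard_le_rk' hI.indep hI.subset)
  obtain ⟨J', hJ', hJJ'⟩ := hJ.subset_isBasis'_of_subset hJX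
  exact (encard_mono hJJ').trans (hJ'.encard_eq_encard hI).le

lemma Indep.rk'_eq (hI : M.Indep I) : M.rk' I = I.encard :=
  hI.isBasis_self.isBasis'.rk'_eq

lemma rk'_mono (h : X ⊆ Y) : M.rk' X ≤ M.rk' Y :=
  rk'_le fun _ hI hIX => encard_le_rk' hI (hIX.trans h)

lemma rk'_le_encard (M : Matroid α) (X : Set α) : M.rk' X ≤ X.encard :=
  rk'_le fun _ _ hIX => encard_mono hIX

lemma rk'_ne_top (hX : X.Finite) : M.rk' X ≠ ⊤ :=
  ((M.rk'_le_encard X).trans_lt hX.encard_lt_top).ne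

lemma rk'_submod (M : Matroid α) (X Y : Set α) :
    M.rk' (X ∪ Y) + M.rk' (X ∩ Y) ≤ M.rk' X + M.rk' Y := by
  obtain ⟨I, hI⟩ := M.exists_isBasis' (X ∩ Y)
  obtain ⟨J, hJ, hIJ⟩ := hI.indep.subset_isBasis'_of_subset
    (hI.subset.trans (inter_subset_left.trans subset_union_left))
  have hJXY : J ∩ X ∪ J ∩ Y = J := by
    rw [← inter_union_distrib_left, inter_eq_left.2 hJ.subset]
  have hJint : J ∩ X ∩ (J ∩ Y) = I := by
    rw [inter_inter_inter_comm, inter_self]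
    exact (hI.eq_of_subset_indep (hJ.indep.inter_right _)
      (subset_inter hIJ hI.subset) inter_subset_right).symm
  have hcard := encard_union_add_encard_inter (J ∩ X) (J ∩ Y)
  rw [hJXY, hJint] at hcard
  rw [hJ.rk'_eq, hI.rk'_eq, hcard]
  exact add_le_add (encard_le_rk' (hJ.indep.inter_right _) inter_subset_right)
    (encard_le_rk' (hJ.indep.inter_right _) inter_subset_right)

lemma IsCircuit'.dep (hC : M.IsCircuit' C) : M.Dep C := hC.1

lemma IsCircuit'.subset_ground (hC : M.IsCircuit' C) : C ⊆ M.E := hC.1.subset_ground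

lemma IsCircuit'.ssubset_indep (hC : M.IsCircuit' C) (hIC : I ⊂ C) : M.Indep I := by
  rw [← not_dep_iff (hIC.subset.trans hC.subset_ground)]
  exact hC.2 I hIC

lemma IsCircuit'.diff_singleton_indep (hC : M.IsCircuit' C) (he : e ∈ C) :
    M.Indep (C \ {e}) :=
  hC.ssubset_indep (sdiff_singleton_ssubset.2 he)

lemma IsCircuit'.rk'_add_one (hC : M.IsCircuit' C) (hfin : C.Finite) :
    M.rk' C + 1 = C.encard := by
  obtain ⟨e, he⟩ := hC.dep.nonempty
  have h1 : (C \ {e}).encard + 1 = C.encard := by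
    have := encard_diff_add_encard_of_subset (singleton_subset_iff.2 he)
    rwa [encard_singleton] at this
  rw [← h1]
  congr 1
  refine le_antisymm (rk'_le fun I hI hIC => ?_)
    (encard_le_rk' (hC.diff_singleton_indep he) diff_subset)
  have hss : I ⊂ C := hIC.ssubset_of_ne (fun h => hC.dep.not_indep (h ▸ hI))
  have hlt : I.encard < C.encard := (hfin.subset hss.subset).encard_lt_encard hss
  rw [← h1] at hlt
  exact Order.le_of_lt_add_one hlt

lemma IsCircuit'.inter_indep (h₁ : M.IsCircuit' C₁) (h₂ : M.IsCircuit' C₂) (hne : C₁ ≠ C₂) :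
    M.Indep (C₁ ∩ C₂) := by
  refine h₁.ssubset_indep (inter_subset_left.ssubset_of_ne fun h => ?_)
  have hss : C₁ ⊆ C₂ := by rw [← h]; exact inter_subset_right
  exact h₂.2 C₁ (hss.ssubset_of_ne hne) h₁.dep

lemma exists_isCircuit_subset (hfin : D.Finite) (hD : M.Dep D) :
    ∃ C, C ⊆ D ∧ M.IsCircuit' C := by
  classical
  have h : ∃ n, ∃ C, C ⊆ D ∧ M.Dep C ∧ C.ncard = n := ⟨_, D, Subset.rfl, hD, rfl⟩
  obtain ⟨C, hCD, hCdep, hcard⟩ := Nat.find_spec h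
  refine ⟨C, hCD, hCdep, fun D' hss hdep => ?_⟩
  have hlt : D'.ncard < C.ncard := Set.ncard_lt_ncard hss (hfin.subset hCD)
  rw [hcard] at hlt
  exact Nat.find_min h hlt ⟨D', hss.subset.trans hCD, hdep, rfl⟩

/-- A union of two distinct circuits has nullity at least two. -/
lemma nullity_ge_two (h₁ : M.IsCircuit' C₁) (h₂ : M.IsCircuit' C₂) (hne : C₁ ≠ C₂)
    (hfin : (C₁ ∪ C₂).Finite) :
    M.rk' (C₁ ∪ C₂) + 2 ≤ (C₁ ∪ C₂).encard := by
  have hsub := M.rk'_submod C₁ C₂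
  have hi := (h₁.inter_indep h₂ hne).rk'_eq
  have hc1 := h₁.rk'_add_one (hfin.subset subset_union_left)
  have hc2 := h₂.rk'_add_one (hfin.subset subset_union_right)
  have hcard := encard_union_add_encard_inter C₁ C₂
  lift M.rk' (C₁ ∪ C₂) to ℕ using rk'_ne_top hfin with a
  lift M.rk' C₁ to ℕ using rk'_ne_top (hfin.subset subset_union_left) with b
  lift M.rk' C₂ to ℕ using rk'_ne_top (hfin.subset subset_union_right) with c'
  lift (C₁ ∪ C₂).encard to ℕ using hfin.encard_lt_top.ne with u
  lift (C₁ ∩ C₂).encard to ℕ using ((hfin.subset subset_union_left).inter_of_left _).encard_lt_top.ne with i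
  lift C₁.encard to ℕ using (hfin.subset subset_union_left).encard_lt_top.ne with n1
  lift C₂.encard to ℕ using (hfin.subset subset_union_right).encard_lt_top.ne with n2
  rw [hi] at hsub
  norm_cast at hsub hc1 hc2 hcard ⊢
  omega

/-- Nullity strictly increases on proper containments of unions of circuits. -/
lemma nullity_step (hXfin : X.Finite) (hYX : Y ⊂ X)
    (hcirc : ∀ e ∈ X \ Y, ∃ C, e ∈ C ∧ C ⊆ X ∧ M.IsCircuit' C) (hXE : X ⊆ M.E) :
    M.rk' X + Y.encard + 1 ≤ M.rk' Y + X.encard := by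
  obtain ⟨J, hJ⟩ := M.exists_isBasis' Y
  obtain ⟨I, hI, hJI⟩ := hJ.indep.subset_isBasis'_of_subset (hJ.subset.trans hYX.subset)
  have hIY : I ∩ Y = J :=
    (hJ.eq_of_subset_indep (hI.indep.inter_right Y)
      (subset_inter hJI hJ.subset) inter_subset_right).symm
  -- some element of X \ Y is not in I
  have hex : ∃ e ∈ X \ Y, e ∉ I := by
    by_contra hcon
    push_neg at hcon
    obtain ⟨e, heX, heY⟩ := exists_of_ssubset hYX
    obtain ⟨C, heC, hCX, hC⟩ := hcirc e ⟨heX, heY⟩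
    have heI : e ∈ I := hcon e ⟨heX, heY⟩
    have hecl : e ∈ M.closure (C \ {e}) := by
      rw [(hC.diff_singleton_indep heC).mem_closure_iff]
      left
      rw [insert_diff_singleton, insert_eq_of_mem heC]
      exact hC.dep
    have hsub : C \ {e} ⊆ M.closure (I \ {e}) := by
      rintro f ⟨hfC, hfe : f ≠ e⟩
      by_cases hfY : f ∈ Y
      · have hYcl : Y ⊆ M.closure J := by
          rw [hJ.closure_eq_closure]
          exact M.subset_closure Y (hYX.subset.trans hXE)
        refine M.closure_subset_closure ?_ (hYcl hfY)
        exact subset_diff_singleton hJI fun heJ => heY (hJ.subset heJ)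
      · have hfI : f ∈ I := hcon f ⟨hCX hfC, hfY⟩
        exact M.subset_closure _ ((diff_subset.trans hI.indep.subset_ground)) ⟨hfI, hfe⟩
    have : e ∈ M.closure (I \ {e}) :=
      closure_closure M _ ▸ M.closure_subset_closure hsub hecl
    exact (indep_iff_forall_notMem_closure_diff hI.indep.subset_ground).1
      hI.indep heI this
  obtain ⟨e, heXY, heI⟩ := hex
  have hdd : I \ J ⊂ X \ Y := by
    refine ssubset_iff_of_subset (fun f hf => ?_) |>.2 ⟨e, heXY, fun h => heI h.1⟩
    · rw [← hIY] at hf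
      exact ⟨hI.subset hf.1, fun hfY => hf.2 ⟨hf.1, hfY⟩⟩
  have hlt : (I \ J).encard < (X \ Y).encard :=
    (hXfin.diff.subset hdd.subset).encard_lt_encard hdd
  have hc1 : (I \ J).encard + J.encard = I.encard :=
    encard_diff_add_encard_of_subset hJI
  have hc2 : (X \ Y).encard + Y.encard = X.encard :=
    encard_diff_add_encard_of_subset hYX.subset
  rw [hI.rk'_eq, hJ.rk'_eq]
  have hIfin : I.Finite := hXfin.subset hI.subset
  have hYfin : Y.Finite := hXfin.subset hYX.subset
  lift I.encard to ℕ using hIfin.encard_lt_top.ne with a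
  lift J.encard to ℕ using (hIfin.subset hJI).encard_lt_top.ne with b
  lift X.encard to ℕ using hXfin.encard_lt_top.ne with u
  lift Y.encard to ℕ using hYfin.encard_lt_top.ne with v
  lift (I \ J).encard to ℕ using (hIfin.diff).encard_lt_top.ne with p
  lift (X \ Y).encard to ℕ using ((hXfin.diff)).encard_lt_top.ne with q
  norm_cast at hlt hc1 hc2 ⊢
  omega

lemma dep_of_rk'_lt (hlt : M.rk' Y < Y.encard) (hYE : Y ⊆ M.E) : M.Dep Y := by
  rw [dep_iff, and_iff_left hYE]
  exact fun hi => hlt.ne (hi.rk'_eq)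

/-- If the union of two circuits has nullity at least 3, it properly contains
a union of two distinct circuits. -/
lemma exists_of_nullity_ge_three (h₁ : M.IsCircuit' C₁) (h₂ : M.IsCircuit' C₂) (hne : C₁ ≠ C₂)
    (hfin : (C₁ ∪ C₂).Finite)
    (h3 : M.rk' (C₁ ∪ C₂) + 3 ≤ (C₁ ∪ C₂).encard) :
    ∃ D₁ D₂, M.IsCircuit' D₁ ∧ M.IsCircuit' D₂ ∧ D₁ ≠ D₂ ∧ D₁ ∪ D₂ ⊂ C₁ ∪ C₂ := by
  have hXE : C₁ ∪ C₂ ⊆ M.E := union_subset h₁.subset_ground h₂.subset_ground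
  obtain ⟨e, heC₂, heC₁⟩ : ∃ e ∈ C₂, e ∉ C₁ := by
    by_contra hcon
    push_neg at hcon
    exact h₁.2 C₂ (HasSubset.Subset.ssubset_of_ne (fun x hx => hcon x hx) (Ne.symm hne)) h₂.dep
  set Y := (C₁ ∪ C₂) \ {e} with hYdef
  have hYfin : Y.Finite := hfin.diff
  have hYcard : Y.encard + 1 = (C₁ ∪ C₂).encard := by
    have := encard_diff_add_encard_of_subset
      (singleton_subset_iff.2 (show e ∈ C₁ ∪ C₂ from Or.inr heC₂))
    rwa [encard_singleton] at this
  have hrY : M.rk' Y + 2 ≤ Y.encard := by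
    have h4 : M.rk' Y ≤ M.rk' (C₁ ∪ C₂) := rk'_mono diff_subset
    lift M.rk' Y to ℕ using rk'_ne_top hYfin with a
    lift M.rk' (C₁ ∪ C₂) to ℕ using rk'_ne_top hfin with b
    lift Y.encard to ℕ using hYfin.encard_lt_top.ne with v
    lift (C₁ ∪ C₂).encard to ℕ using hfin.encard_lt_top.ne with u
    norm_cast at h3 h4 hYcard ⊢
    omega
  have hYE : Y ⊆ M.E := diff_subset.trans hXE
  have hYdep : M.Dep Y := by
    refine dep_of_rk'_lt ?_ hYE
    lift M.rk' Y to ℕ using rk'_ne_top hYfin with a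
    lift Y.encard to ℕ using hYfin.encard_lt_top.ne with v
    norm_cast at hrY ⊢
    omega
  obtain ⟨D₁, hD₁Y, hD₁⟩ := exists_isCircuit_subset hYfin hYdep
  obtain ⟨f, hf⟩ := hD₁.dep.nonempty
  have hY'dep : M.Dep (Y \ {f}) := by
    refine dep_of_rk'_lt ?_ (diff_subset.trans hYE)
    have h5 : M.rk' (Y \ {f}) ≤ M.rk' Y := rk'_mono diff_subset
    have h6 : (Y \ {f}).encard + 1 = Y.encard := by
      have := encard_diff_add_encard_of_subset (singleton_subset_iff.2 (hD₁Y hf))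
      rwa [encard_singleton] at this
    lift M.rk' (Y \ {f}) to ℕ using rk'_ne_top (hYfin.diff) with a
    lift M.rk' Y to ℕ using rk'_ne_top hYfin with b
    lift (Y \ {f}).encard to ℕ using (hYfin.diff).encard_lt_top.ne with v
    lift Y.encard to ℕ using hYfin.encard_lt_top.ne with u
    norm_cast at hrY h5 h6 ⊢
    omega
  obtain ⟨D₂, hD₂Y, hD₂⟩ := exists_isCircuit_subset (hYfin.diff) hY'dep
  refine ⟨D₁, D₂, hD₁, hD₂, fun h => (hD₂Y (h ▸ hf)).2 rfl, ?_⟩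
  refine (union_subset hD₁Y (hD₂Y.trans diff_subset)).trans diff_subset
    |>.ssubset_of_ne fun h => ?_
  have : e ∈ D₁ ∪ D₂ := h.symm ▸ Or.inr heC₂
  exact ((union_subset hD₁Y (hD₂Y.trans diff_subset)) this).2 rfl

end Matroid

/-- Distinct circuits `C₁, C₂` of a matroid form a modular pair iff
`r(C₁ ∪ C₂) + r(C₁ ∩ C₂) = r(C₁) + r(C₂)`. -/
theorem modularPair_iff_rank (M : Matroid α) (hE : M.E.Finite) (C₁ C₂ : Set α)
    (h₁ : M.IsCircuit' C₁) (h₂ : M.IsCircuit' C₂) (hne : C₁ ≠ C₂) :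
    M.ModularPairOfCircuits C₁ C₂ ↔
      M.rk' (C₁ ∪ C₂) + M.rk' (C₁ ∩ C₂) = M.rk' C₁ + M.rk' C₂ := by
  have hXE : C₁ ∪ C₂ ⊆ M.E := union_subset h₁.subset_ground h₂.subset_ground
  have hfin : (C₁ ∪ C₂).Finite := hE.subset hXE
  have hK1 := Matroid.nullity_ge_two h₁ h₂ hne hfin
  -- the rank equation is equivalent to nullity-two
  have hiff : (M.rk' (C₁ ∪ C₂) + M.rk' (C₁ ∩ C₂) = M.rk' C₁ + M.rk' C₂) ↔
      M.rk' (C₁ ∪ C₂) + 2 = (C₁ ∪ C₂).encard := by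
    have hi := (h₁.inter_indep h₂ hne).rk'_eq
    have hc1 := h₁.rk'_add_one (hfin.subset subset_union_left)
    have hc2 := h₂.rk'_add_one (hfin.subset subset_union_right)
    have hcard := Set.encard_union_add_encard_inter C₁ C₂
    rw [hi]
    lift M.rk' (C₁ ∪ C₂) to ℕ using Matroid.rk'_ne_top hfin with a
    lift M.rk' C₁ to ℕ using Matroid.rk'_ne_top (hfin.subset subset_union_left) with b
    lift M.rk' C₂ to ℕ using Matroid.rk'_ne_top (hfin.subset subset_union_right) with c'
    lift (C₁ ∪ C₂).encard to ℕ using hfin.encard_lt_top.ne with u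
    lift (C₁ ∩ C₂).encard to ℕ using
      ((hfin.subset subset_union_left).inter_of_left _).encard_lt_top.ne with i
    lift C₁.encard to ℕ using (hfin.subset subset_union_left).encard_lt_top.ne with n1
    lift C₂.encard to ℕ using (hfin.subset subset_union_right).encard_lt_top.ne with n2
    norm_cast at hc1 hc2 hcard ⊢
    omega
  rw [hiff]
  constructor
  · rintro ⟨-, hmp⟩
    refine le_antisymm hK1 ?_
    by_contra hcon
    push_neg at hcon
    have h3 : M.rk' (C₁ ∪ C₂) + 3 ≤ (C₁ ∪ C₂).encard := by
      lift M.rk' (C₁ ∪ C₂) to ℕ using Matroid.rk'_ne_top hfin with a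
      lift (C₁ ∪ C₂).encard to ℕ using hfin.encard_lt_top.ne with u
      norm_cast at hcon ⊢

    obtain ⟨D₁, D₂, hD₁, hD₂, hDne, hss⟩ :=
      Matroid.exists_of_nullity_ge_three h₁ h₂ hne hfin h3
    exact hmp D₁ D₂ hD₁ hD₂ hDne hss
  · intro heq
    refine ⟨hne, fun D₁ D₂ hD₁ hD₂ hDne hss => ?_⟩
    have hstep := Matroid.nullity_step hfin hss (fun e he => ?_) hXE
    · have hK1' := Matroid.nullity_ge_two hD₁ hD₂ hDne (hfin.subset hss.subset)
      have hYfin : (D₁ ∪ D₂).Finite := hfin.subset hss.subset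
      lift M.rk' (C₁ ∪ C₂) to ℕ using Matroid.rk'_ne_top hfin with a
      lift M.rk' (D₁ ∪ D₂) to ℕ using Matroid.rk'_ne_top hYfin with b
      lift (C₁ ∪ C₂).encard to ℕ using hfin.encard_lt_top.ne with u
      lift (D₁ ∪ D₂).encard to ℕ using hYfin.encard_lt_top.ne with v
      norm_cast at heq hstep hK1'
      omega
    · rcases he.1 with h | h
      exacts [⟨C₁, h, subset_union_left, h₁⟩, ⟨C₂, h, subset_union_right, h₂⟩]
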